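/- In the reduction closure system for Theorem 2 — U = V ∪ C ∪ {a, b} with C = {c_1,…,c_m}, and implications {a,v} → c_j for v ∈ C_j, C → b, {v,w} → b for variables v, w in conflict, and {c_j} → a for each j — the D-relation is acyclic; moreover, every directed D-path has length at most 2. -/
import Mathlib


/-- `F` is closed for the implicational base `I`. -/
def ImpClosed {U : Type*} (I : Set (Set U × U)) (F : Set U) : Prop :=
  ∀ p ∈ I, p.1 ⊆ F → p.2 ∈ F

/-- The closure operator induced by an implicational base `I`. -/
def clI {U : Type*} (I : Set (Set U × U)) (A : Set U) : Set U :=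
  ⋂₀ {F | ImpClosed I F ∧ A ⊆ F}

/-- `cl^b(A) = ⋃_{a ∈ A} cl({a})`. -/
def clb {U : Type*} (cl : Set U → Set U) (A : Set U) : Set U := ⋃ a ∈ A, cl {a}

/-- `A` is a minimal generator of `c`. -/
def MinGen {U : Type*} (cl : Set U → Set U) (c : U) (A : Set U) : Prop :=
  c ∉ A ∧ c ∈ cl A ∧ ∀ A' ⊂ A, c ∉ cl A'

/-- `A` is a `D`-generator of `c`. -/
def DGen {U : Type*} (cl : Set U → Set U) (c : U) (A : Set U) : Prop :=
  MinGen cl c A ∧ c ∉ clb cl A ∧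
    ∀ A', MinGen cl c A' → A' ⊆ clb cl A → A' = A

/-- Two (distinct) variables are in conflict if some clause contains both. -/
def Conflict {V : Type*} {m : ℕ} (C : Fin m → Finset V) (v w : V) : Prop :=
  v ≠ w ∧ ∃ j, v ∈ C j ∧ w ∈ C j

namespace Stmt14Aux

/-- The implicational base of the second reduction. -/
def RedI {V : Type*} {m : ℕ} (C : Fin m → Finset V) :
    Set (Set (V ⊕ (Fin m ⊕ Bool)) × (V ⊕ (Fin m ⊕ Bool))) :=
  {p | ∃ (j : Fin m) (v : V), v ∈ C j ∧
    p = ({Sum.inr (Sum.inr false), Sum.inl v}, Sum.inr (Sum.inl j))} ∪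
  {({x | ∃ j : Fin m, x = Sum.inr (Sum.inl j)}, Sum.inr (Sum.inr true))} ∪
  {p | ∃ v w : V, Conflict C v w ∧
    p = ({Sum.inl v, Sum.inl w}, Sum.inr (Sum.inr true))} ∪
  {p | ∃ j : Fin m, p = ({Sum.inr (Sum.inl j)}, Sum.inr (Sum.inr false))}

section General

variable {U : Type*} {I : Set (Set U × U)} {A B F : Set U}

lemma subset_clI : A ⊆ clI I A := fun x hx =>
  Set.mem_sInter.mpr fun _ hF => hF.2 hx

lemma clI_le (hF : ImpClosed I F) (hA : A ⊆ F) : clI I A ⊆ F :=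
  fun _ hx => Set.mem_sInter.mp hx F ⟨hF, hA⟩

lemma clI_mono (h : A ⊆ B) : clI I A ⊆ clI I B := fun x hx =>
  Set.mem_sInter.mpr fun F hF => Set.mem_sInter.mp hx F ⟨hF.1, h.trans hF.2⟩

lemma impClosed_clI : ImpClosed I (clI I A) := by
  intro p hp hsub
  refine Set.mem_sInter.mpr fun F hF => ?_
  exact hF.1 p hp (hsub.trans (clI_le hF.1 hF.2))

end General

section Red

variable {V : Type*} {m : ℕ} {C : Fin m → Finset V}

lemma imp1_mem {j : Fin m} {v : V} (hv : v ∈ C j) :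
    (({Sum.inr (Sum.inr false), Sum.inl v}, Sum.inr (Sum.inl j)) :
      Set (V ⊕ (Fin m ⊕ Bool)) × (V ⊕ (Fin m ⊕ Bool))) ∈ RedI C :=
  Or.inl (Or.inl (Or.inl ⟨j, v, hv, rfl⟩))

lemma imp4_mem (j : Fin m) :
    (({Sum.inr (Sum.inl j)}, Sum.inr (Sum.inr false)) :
      Set (V ⊕ (Fin m ⊕ Bool)) × (V ⊕ (Fin m ⊕ Bool))) ∈ RedI C :=
  Or.inr ⟨j, rfl⟩

lemma impClosed_of {F : Set (V ⊕ (Fin m ⊕ Bool))}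
    (h1 : ∀ (j : Fin m) (v : V), v ∈ C j → Sum.inr (Sum.inr false) ∈ F →
      Sum.inl v ∈ F → Sum.inr (Sum.inl j) ∈ F)
    (h2 : (∀ j : Fin m, Sum.inr (Sum.inl j) ∈ F) → Sum.inr (Sum.inr true) ∈ F)
    (h3 : ∀ v w : V, Conflict C v w → Sum.inl v ∈ F → Sum.inl w ∈ F →
      Sum.inr (Sum.inr true) ∈ F)
    (h4 : ∀ j : Fin m, Sum.inr (Sum.inl j) ∈ F → Sum.inr (Sum.inr false) ∈ F) :
    ImpClosed (RedI C) F := by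
  rintro p (((⟨j, v, hv, rfl⟩ | rfl) | ⟨v, w, hc, rfl⟩) | ⟨j, rfl⟩) hsub
  · exact h1 j v hv (hsub (Set.mem_insert _ _)) (hsub (Set.mem_insert_of_mem _ rfl))
  · exact h2 fun j => hsub ⟨j, rfl⟩
  · exact h3 v w hc (hsub (Set.mem_insert _ _)) (hsub (Set.mem_insert_of_mem _ rfl))
  · exact h4 j (hsub rfl)

/-- Every head is of the form `Sum.inr _`. -/
lemma cl_subset_union_range (A : Set (V ⊕ (Fin m ⊕ Bool))) :
    clI (RedI C) A ⊆ A ∪ Set.range Sum.inr :=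
  clI_le (impClosed_of (fun _ _ _ _ _ => Or.inr ⟨_, rfl⟩) (fun _ => Or.inr ⟨_, rfl⟩)
    (fun _ _ _ _ _ => Or.inr ⟨_, rfl⟩) (fun _ _ => Or.inr ⟨_, rfl⟩)) Set.subset_union_left

/-- If `a ∈ cl A`, then `a ∈ A` or a clause belongs to `A`. -/
lemma a_in {A : Set (V ⊕ (Fin m ⊕ Bool))}
    (h : Sum.inr (Sum.inr false) ∈ clI (RedI C) A) :
    Sum.inr (Sum.inr false) ∈ A ∨ ∃ j : Fin m, Sum.inr (Sum.inl j) ∈ A := by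
  by_contra hcon
  push_neg at hcon
  obtain ⟨ha, hcl⟩ := hcon
  have hF : ImpClosed (RedI C) (A ∪ {Sum.inr (Sum.inr true)}) := by
    refine impClosed_of ?_ ?_ ?_ ?_
    · rintro j v _ (h | h) _
      · exact absurd h ha
      · simp at h
    · intro _; exact Or.inr rfl
    · intro _ _ _ _ _; exact Or.inr rfl
    · rintro j (h | h)
      · exact absurd h (hcl j)
      · simp at h
  have := clI_le hF Set.subset_union_left h
  rcases this with h | h
  · exact ha h
  · simp at h

/-- If `c_j ∈ cl A` and `c_j ∉ A`, then `A` contains a variable of clause `j`. -/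
lemma clause_var {A : Set (V ⊕ (Fin m ⊕ Bool))} {j : Fin m}
    (hj : Sum.inr (Sum.inl j) ∉ A) (h : Sum.inr (Sum.inl j) ∈ clI (RedI C) A) :
    ∃ v ∈ C j, Sum.inl v ∈ A := by
  by_contra hcon
  push_neg at hcon
  set F : Set (V ⊕ (Fin m ⊕ Bool)) :=
    {x | x ≠ Sum.inr (Sum.inl j) ∧ ∀ v ∈ C j, x ≠ Sum.inl v} with hFdef
  have hAF : A ⊆ F := by
    intro x hx
    constructor
    · rintro rfl; exact hj hx
    · rintro v hv rfl; exact hcon v hv hx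
  have hF : ImpClosed (RedI C) F := by
    refine impClosed_of ?_ ?_ ?_ ?_
    · intro j' v hv _ hvF
      by_cases hjj : j' = j
      · subst hjj
        exact absurd rfl (hvF.2 v hv)
      · exact ⟨by simp [hjj], by simp⟩
    · intro _; exact ⟨by simp, by simp⟩
    · intro _ _ _ _ _; exact ⟨by simp, by simp⟩
    · intro _ _; exact ⟨by simp, by simp⟩
  exact (clI_le hF hAF h).1 rfl

/-- `{a}` is closed (provided there is at least one clause). -/
lemma closed_a (j₀ : Fin m) :
    ImpClosed (RedI C) ({Sum.inr (Sum.inr false)} : Set (V ⊕ (Fin m ⊕ Bool))) := by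
  refine impClosed_of ?_ ?_ ?_ ?_
  · intro _ v _ _ hv; simp at hv
  · intro h; have := h j₀; simp at this
  · intro _ _ _ hv _; simp at hv
  · intro j hj; simp at hj

/-- `{Sum.inl v}` is closed (provided there is at least one clause). -/
lemma closed_var (j₀ : Fin m) (v : V) :
    ImpClosed (RedI C) ({Sum.inl v} : Set (V ⊕ (Fin m ⊕ Bool))) := by
  refine impClosed_of ?_ ?_ ?_ ?_
  · intro _ _ _ ha _; simp at ha
  · intro h; have := h j₀; simp at this
  · intro v' w hc hv' hw
    simp only [Set.mem_singleton_iff, Sum.inl.injEq] at hv' hw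
    exact absurd (hv'.trans hw.symm) hc.1
  · intro j hj; simp at hj

/-- `a ∈ cl {c_j}`. -/
lemma a_mem_cl_clause (j : Fin m) :
    Sum.inr (Sum.inr false) ∈
      clI (RedI C) ({Sum.inr (Sum.inl j)} : Set (V ⊕ (Fin m ⊕ Bool))) :=
  impClosed_clI _ (imp4_mem j) subset_clI

/-- `c_j ∈ cl {a, v}` for `v ∈ C j`. -/
lemma clause_mem_cl_pair {j : Fin m} {v : V} (hv : v ∈ C j) :
    Sum.inr (Sum.inl j) ∈
      clI (RedI C) ({Sum.inr (Sum.inr false), Sum.inl v} :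
        Set (V ⊕ (Fin m ⊕ Bool))) :=
  impClosed_clI _ (imp1_mem hv) subset_clI

/-- `a` has no `D`-generators. -/
lemma not_DGen_a (A : Set (V ⊕ (Fin m ⊕ Bool))) :
    ¬ DGen (clI (RedI C)) (Sum.inr (Sum.inr false)) A := by
  rintro ⟨⟨hnA, hmem, _⟩, hnb, _⟩
  rcases a_in hmem with h | ⟨j, hj⟩
  · exact hnA h
  · exact hnb (Set.mem_biUnion hj (a_mem_cl_clause j))

/-- `{a, v}` is a minimal generator of `c_j` for `v ∈ C j`. -/
lemma minGen_pair {j : Fin m} {v : V} (hv : v ∈ C j) :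
    MinGen (clI (RedI C)) (Sum.inr (Sum.inl j))
      ({Sum.inr (Sum.inr false), Sum.inl v} : Set (V ⊕ (Fin m ⊕ Bool))) := by
  refine ⟨by simp, clause_mem_cl_pair hv, ?_⟩
  intro A' hA'
  have hsub : A' ⊆ {Sum.inr (Sum.inr false), Sum.inl v} := hA'.1
  by_cases ha : Sum.inr (Sum.inr false) ∈ A'
  · by_cases hvv : Sum.inl v ∈ A'
    · exfalso
      exact hA'.2 (Set.insert_subset ha (Set.singleton_subset_iff.mpr hvv))
    · have : A' ⊆ {Sum.inr (Sum.inr false)} := by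
        intro x hx
        rcases hsub hx with h | h
        · exact h
        · exact absurd (h ▸ hx) hvv
      intro hmem
      have := clI_le (closed_a j) subset_rfl ((clI_mono this) hmem)
      simp at this
  · have : A' ⊆ {Sum.inl v} := by
      intro x hx
      rcases hsub hx with h | h
      · exact absurd (h ▸ hx) ha
      · exact h
    intro hmem
    have := clI_le (closed_var j v) subset_rfl ((clI_mono this) hmem)
    simp at this

/-- A `D`-generator of a clause `c_j` equals `{a, v}` for some `v ∈ C j`. -/
lemma DGen_clause {A : Set (V ⊕ (Fin m ⊕ Bool))} {j : Fin m}
    (h : DGen (clI (RedI C)) (Sum.inr (Sum.inl j)) A) :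
    ∃ v ∈ C j, A = {Sum.inr (Sum.inr false), Sum.inl v} := by
  obtain ⟨⟨hcA, hcmem, _⟩, hnb, huniq⟩ := h
  obtain ⟨v, hv, hvA⟩ := clause_var hcA hcmem
  have ha : Sum.inr (Sum.inr false) ∈ clI (RedI C) A :=
    impClosed_clI _ (imp4_mem j) (Set.singleton_subset_iff.mpr hcmem)
  have haclb : Sum.inr (Sum.inr false) ∈ clb (clI (RedI C)) A := by
    rcases a_in ha with h | ⟨k, hk⟩
    · exact Set.mem_biUnion h (subset_clI rfl)
    · exact Set.mem_biUnion hk (a_mem_cl_clause k)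
  have hvclb : Sum.inl v ∈ clb (clI (RedI C)) A :=
    Set.mem_biUnion hvA (subset_clI rfl)
  have heq := huniq _ (minGen_pair hv)
    (Set.insert_subset haclb (Set.singleton_subset_iff.mpr hvclb))
  exact ⟨v, hv, heq.symm⟩

/-- Every target of a `D`-generator relation is `b` or a clause. -/
lemma DGen_head {c : V ⊕ (Fin m ⊕ Bool)} {A : Set (V ⊕ (Fin m ⊕ Bool))}
    (h : DGen (clI (RedI C)) c A) :
    c = Sum.inr (Sum.inr true) ∨ ∃ j : Fin m, c = Sum.inr (Sum.inl j) := by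
  have hc := h.1.1
  have hmem := h.1.2.1
  rcases cl_subset_union_range A hmem with hA | ⟨s, rfl⟩
  · exact absurd hA hc
  rcases s with j | bo
  · exact Or.inr ⟨j, rfl⟩
  · cases bo
    · exact absurd h (not_DGen_a A)
    · exact Or.inl rfl

end Red

end Stmt14Aux

/-- in the second reduction, the `D`-relation
(`c D a` iff `a` belongs to some `D`-generator of `c`) is acyclic and
every directed `D`-path has length at most 2 (no three consecutive edges). -/
theorem stmt14 {V : Type*} [Fintype V] (m : ℕ)
    (C : Fin m → Finset V) (hC : ∀ j, (C j).card = 3)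
    (I : Set (Set (V ⊕ (Fin m ⊕ Bool)) × (V ⊕ (Fin m ⊕ Bool))))
    (hI : I =
      {p | ∃ (j : Fin m) (v : V), v ∈ C j ∧
        p = ({Sum.inr (Sum.inr false), Sum.inl v}, Sum.inr (Sum.inl j))} ∪
      {({x | ∃ j : Fin m, x = Sum.inr (Sum.inl j)}, Sum.inr (Sum.inr true))} ∪
      {p | ∃ v w : V, Conflict C v w ∧
        p = ({Sum.inl v, Sum.inl w}, Sum.inr (Sum.inr true))} ∪
      {p | ∃ j : Fin m, p = ({Sum.inr (Sum.inl j)}, Sum.inr (Sum.inr false))})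
    (D : (V ⊕ (Fin m ⊕ Bool)) → (V ⊕ (Fin m ⊕ Bool)) → Prop)
    (hD : D = fun c a => ∃ A, DGen (clI I) c A ∧ a ∈ A) :
    (∀ x, ¬ Relation.TransGen D x x) ∧
    (∀ x y z w, D x y → D y z → D z w → False) := by
  have hIR : I = Stmt14Aux.RedI C := hI
  subst hIR
  subst hD
  have no3 : ∀ x y z w,
      (∃ A, DGen (clI (Stmt14Aux.RedI C)) x A ∧ y ∈ A) →
      (∃ A, DGen (clI (Stmt14Aux.RedI C)) y A ∧ z ∈ A) →
      (∃ A, DGen (clI (Stmt14Aux.RedI C)) z A ∧ w ∈ A) → False := by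
    rintro x y z w ⟨A1, h1, hy1⟩ ⟨A2, h2, hz2⟩ ⟨A3, h3, hw3⟩
    rcases Stmt14Aux.DGen_head h1 with hx | ⟨j, hx⟩
    · rcases Stmt14Aux.DGen_head h2 with hy | ⟨k, hy⟩
      · -- x = b, y = b : b ∈ A1 contradicts MinGen
        subst hx; subst hy
        exact h1.1.1 hy1
      · -- y is a clause: A2 = {a, v}, so z = a or z = var; but z is b or clause
        subst hy
        obtain ⟨v, hv, rfl⟩ := Stmt14Aux.DGen_clause h2
        rcases Stmt14Aux.DGen_head h3 with hz | ⟨l, hz⟩ <;>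
          · subst hz; simp at hz2
    · -- x is a clause: A1 = {a, v}, so y = a or var; but y is b or clause
      subst hx
      obtain ⟨v, hv, rfl⟩ := Stmt14Aux.DGen_clause h1
      rcases Stmt14Aux.DGen_head h2 with hy | ⟨k, hy⟩ <;>
        · subst hy; simp at hy1
  refine ⟨?_, no3⟩
  intro x hx
  have key : ∀ y, Relation.TransGen (fun c a => ∃ A, DGen (clI (Stmt14Aux.RedI C)) c A ∧ a ∈ A) x y →
      (∃ A, DGen (clI (Stmt14Aux.RedI C)) x A ∧ y ∈ A) ∨
      ∃ u, (∃ A, DGen (clI (Stmt14Aux.RedI C)) x A ∧ u ∈ A) ∧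
        (∃ A, DGen (clI (Stmt14Aux.RedI C)) u A ∧ y ∈ A) := by
    intro y h
    induction h with
    | single h => exact Or.inl h
    | tail _ hyz ih =>
      rcases ih with h | ⟨u, hu1, hu2⟩
      · exact Or.inr ⟨_, h, hyz⟩
      · exact (no3 _ _ _ _ hu1 hu2 hyz).elim
  rcases key x hx with h | ⟨u, h1, h2⟩
  · exact no3 _ _ _ _ h h h
  · exact no3 _ _ _ _ h1 h2 h1
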